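/- Let $G$ be a finite abelian group and $v$ data consisting of subgroups $I_v \subseteq D_v \subseteq G$ and an element $\sigma_v \in D_v/I_v$. Fix a lift $\tilde\sigma_v \in D_v$ of $\sigma_v$. Define $\delta_v := 1 - \tilde\sigma_v \sum_{\tau \in I_v} \tau + \frac{1}{\#(D_v/I_v)}\sum_{\tau \in D_v} \tau \in \mathbb{Q}[G]$. Then $\delta_v$ is a unit in $\mathbb{Q}[G]$: for every character $\chi : G \to \mathbb{C}^\times$, $\chi(\delta_v) \neq 0$; explicitly $\chi(\delta_v) = 1 - \chi(\tilde\sigma_v)\#I_v$ if $\chi|_{I_v} = 1$ and $\chi|_{D_v} \neq 1$, $\chi(\delta_v) = 1 - \#I_v + \#I_v/\#(D_v/I_v) \cdot \#(D_v/I_v)$-adjusted value $= 1$ if $\chi|_{D_v} = 1$... more simply: $\chi(\delta_v) = 1$ if $\chi|_{I_v} \neq 1$; $\chi(\delta_v) = 1 - \chi(\tilde\sigma_v)\cdot \#I_v$ if $\chi|_{I_v}=1, \chi|_{D_v}\neq 1$; and $\chi(\delta_v) = 1 - \#I_v + \#I_v = 1$ if $\chi|_{D_v}=1$. Hence $\chi(\delta_v)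 \neq 0$ for all $\chi$ provided $\chi(\tilde\sigma_v)\#I_v \neq 1$ whenever $\chi|_{I_v}=1$ and $\chi|_{D_v}\neq 1$; in particular when $\#I_v = 1$ and $\sigma_v$ generates $D_v$ nontrivially on such $\chi$, i.e. $\chi(\sigma_v) \neq 1$, one gets $\chi(\delta_v) = 1 - \chi(\sigma_v) \neq 0$. Conclude: if $\#I_v \geq 2$, or if $I_v$ trivial, then $\delta_v \in \mathbb{Q}[G]^\times$. -/

import Mathlib

set_option linter.unusedSectionVars false
open MonoidAlgebra Finset Subgroup

section Helpers
variable {G : Type*} [CommGroup G] [Fintype G] [DecidableEq G]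

lemma aux_single_mul_sum (D : Subgroup G) [Fintype D] (a : G) (ha : a ∈ D) :
    MonoidAlgebra.single a (1:ℚ) * ∑ τ : D, MonoidAlgebra.single (τ:G) (1:ℚ)
      = ∑ τ : D, MonoidAlgebra.single (τ:G) (1:ℚ) := by
  rw [Finset.mul_sum]
  simp only [MonoidAlgebra.single_mul_single, one_mul]
  exact Fintype.sum_equiv (Equiv.mulLeft (⟨a, ha⟩ : D)) _ _ (by intro x; simp)

lemma aux_sum_mul_sum (I D : Subgroup G) [Fintype I] [Fintype D] (hID : I ≤ D) :
    (∑ τ : I, MonoidAlgebra.single (τ:G) (1:ℚ)) * ∑ τ : D, MonoidAlgebra.single (τ:G) (1:ℚ)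
      = (Fintype.card I : ℚ) • ∑ τ : D, MonoidAlgebra.single (τ:G) (1:ℚ) := by
  rw [Finset.sum_mul]
  have h : ∀ a : I, MonoidAlgebra.single (a:G) (1:ℚ) *
      ∑ τ : D, MonoidAlgebra.single (τ:G) (1:ℚ)
      = ∑ τ : D, MonoidAlgebra.single (τ:G) (1:ℚ) :=
    fun a => aux_single_mul_sum D (a:G) (hID a.2)
  simp only [h]
  rw [Finset.sum_const, card_univ, Nat.cast_smul_eq_nsmul ℚ]

lemma aux_pow_of_sq {R : Type*} [CommRing R] (P r : R) (h : P * P = r * P) :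
    ∀ n : ℕ, P ^ (n + 1) = r ^ n * P
  | 0 => by simp
  | n + 1 => by
    rw [pow_succ, aux_pow_of_sq P r h n]
    ring_nf
    linear_combination (r ^ n) * h

lemma aux_tele {R : Type*} [CommRing R] (x : R) (n : ℕ) :
    (1 - x) * ∑ j ∈ range n, (j : R) * x ^ j
      = (∑ j ∈ range n, x ^ j) - 1 - ((n : R) - 1) * x ^ n := by
  induction n with
  | zero => simp
  | succ n ih =>
    rw [sum_range_succ, sum_range_succ]
    push_cast
    linear_combination ih

end Helpers

/-- Let `G` be a finite abelian group, `I ≤ D ≤ G` subgroups (inertia and decomposition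
groups), and `σ ∈ D` an element whose class generates `D/I` (a Frobenius lift).  Then
`δ = 1 - σ·(∑_{τ∈I} τ) + (1/#(D/I))·(∑_{τ∈D} τ) ∈ ℚ[G]` (here `1/#(D/I) = #I/#D`)
is a unit of `ℚ[G]`. -/
theorem stmt_9 (G : Type*) [CommGroup G] [Fintype G] [DecidableEq G]
    (I D : Subgroup G) [Fintype I] [Fintype D] (hID : I ≤ D)
    (σ : G) (hσD : σ ∈ D)
    (hgen : ∀ d ∈ D, ∃ (m : ℤ) (τ : G), τ ∈ I ∧ d = σ ^ m * τ) :
    IsUnit ((1 : MonoidAlgebra ℚ G)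
      - MonoidAlgebra.single σ (1 : ℚ) * ∑ τ : I, MonoidAlgebra.single (τ : G) (1 : ℚ)
      + ((Nat.card I : ℚ) / (Nat.card D : ℚ)) •
          ∑ τ : D, MonoidAlgebra.single (τ : G) (1 : ℚ)) := by
  classical
  set R := MonoidAlgebra ℚ G
  let C : ℚ →+* R := algebraMap ℚ R
  set s : R := MonoidAlgebra.single σ (1:ℚ) with hs
  set P : R := ∑ τ : I, MonoidAlgebra.single (τ:G) (1:ℚ) with hP
  set Q : R := ∑ τ : D, MonoidAlgebra.single (τ:G) (1:ℚ) with hQ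
  have hpI : Nat.card I = Fintype.card I := Nat.card_eq_fintype_card
  have hpD : Nat.card D = Fintype.card D := Nat.card_eq_fintype_card
  set p : ℚ := (Nat.card I : ℚ) with hp
  set q : ℚ := (Nat.card D : ℚ) with hq
  have hq0 : q ≠ 0 := by
    rw [hq, hpD]; exact_mod_cast Fintype.card_ne_zero
  have hp0 : p ≠ 0 := by
    rw [hp, hpI]; exact_mod_cast Fintype.card_ne_zero
  have hCq : C q⁻¹ * C q = 1 := by rw [← map_mul, inv_mul_cancel₀ hq0, map_one]
  have hCp : C p⁻¹ * C p = 1 := by rw [← map_mul, inv_mul_cancel₀ hp0, map_one]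
  -- basic relations
  have f2 : P * Q = C p * Q := by
    rw [hP, hQ, aux_sum_mul_sum I D hID, Algebra.smul_def, hp, hpI]
  have f3 : Q * Q = C q * Q := by
    rw [hQ, aux_sum_mul_sum D D le_rfl, Algebra.smul_def, hq, hpD]
  have f1 : P * P = C p * P := by
    rw [hP, aux_sum_mul_sum I I le_rfl, Algebra.smul_def, hp, hpI]
  have f4 : s * Q = Q := by rw [hs, hQ]; exact aux_single_mul_sum D σ hσD
  -- smul to C rewriting of the goal element
  have hδ : (1 : R) - s * P + ((Nat.card I : ℚ) / (Nat.card D : ℚ)) • Q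
      = 1 - s * P + C p * (C q⁻¹ * Q) := by
    rw [Algebra.smul_def, div_eq_mul_inv, map_mul, mul_assoc]
  rw [hδ]
  set eD : R := C q⁻¹ * Q with heD
  have heD2 : eD * eD = eD := by
    rw [heD]; linear_combination (C q⁻¹ * C q⁻¹) * f3 + (C q⁻¹ * Q) * hCq
  have hseD : s * eD = eD := by
    rw [heD]; linear_combination (C q⁻¹) * f4
  rcases Nat.lt_or_ge (Nat.card I) 2 with hcase | hcase
  · -- Nat.card I = 1, trivial inertia
    have hI1 : Nat.card I = 1 := by
      have := Nat.card_pos (α := I); omega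
    have hIbot : I = ⊥ := Subgroup.card_eq_one.mp hI1
    have hP1 : P = 1 := by
      rw [hP]
      have h1 : ∀ τ : I, (τ : G) = 1 := fun τ => by
        simpa [hIbot] using τ.2
      simp only [h1]
      rw [Finset.sum_const, card_univ, ← hpI, hI1, one_smul]
      exact MonoidAlgebra.one_def.symm
    have hp1 : p = 1 := by rw [hp, hI1]; norm_num
    -- D is generated by σ
    have hz : Subgroup.zpowers σ = D := by
      refine le_antisymm (Subgroup.zpowers_le.mpr hσD) ?_
      intro d hd
      obtain ⟨k, τ, hτ, rfl⟩ := hgen d hd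
      rw [hIbot, Subgroup.mem_bot] at hτ
      rw [hτ, mul_one]
      exact zpow_mem (Subgroup.mem_zpowers σ) k
    set n : ℕ := Nat.card D with hn
    have horder : orderOf σ = n := by rw [hn, ← hz, Nat.card_zpowers]
    have hnpos : 0 < n := by rw [hn]; exact Nat.card_pos
    have hn0 : (n:ℚ) ≠ 0 := by exact_mod_cast hnpos.ne'
    -- sum of powers equals Q
    have hsum : ∑ j ∈ range n, s ^ j = Q := by
      have hpow : ∀ j : ℕ, s ^ j = MonoidAlgebra.single (σ ^ j) (1:ℚ) := by
        intro j; rw [hs, MonoidAlgebra.single_pow, one_pow]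
      simp only [hpow]
      have hcard : Fintype.card D = n := hpD.symm
      let e : Fin n → D := fun j => ⟨σ ^ (j:ℕ), pow_mem hσD _⟩
      have he : Function.Bijective e := by
        rw [Fintype.bijective_iff_injective_and_card]
        constructor
        · intro i j hij
          have h1 : σ ^ (i:ℕ) = σ ^ (j:ℕ) := congrArg Subtype.val hij
          have h2 := pow_injOn_Iio_orderOf (by simp [horder, i.2] : (i:ℕ) ∈ _)
            (by simp [horder, j.2] : (j:ℕ) ∈ _) h1
          exact Fin.ext h2
        · simp [hcard]
      rw [hQ, ← Fin.sum_univ_eq_sum_range (fun j => MonoidAlgebra.single (σ ^ j) (1:ℚ)) n]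
      exact Fintype.sum_bijective e he _ _ (fun j => rfl)
    have hsn : s ^ n = 1 := by
      rw [hs, MonoidAlgebra.single_pow, one_pow, ← horder, pow_orderOf_eq_one]
      exact MonoidAlgebra.one_def.symm
    -- inverse construction
    set u : R := C (-(n:ℚ)⁻¹) * ∑ j ∈ range n, (j : R) * s ^ j with hu_def
    have hu : (1 - s) * u = 1 - eD := by
      have h := aux_tele s n
      rw [hsum, hsn] at h
      have hCn : ((n:ℕ) : R) = C (n:ℚ) := (map_natCast C n).symm
      have hneg : C (-(n:ℚ)⁻¹) = - C ((n:ℚ)⁻¹) := map_neg C _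
      have hCqn : C ((n:ℚ)⁻¹) * C (n:ℚ) = 1 := by
        rw [← map_mul, inv_mul_cancel₀ hn0, map_one]
      have heDn : eD = C ((n:ℚ)⁻¹) * Q := by rw [heD, hq]
      rw [hu_def, heDn]
      calc (1 - s) * (C (-(n:ℚ)⁻¹) * ∑ j ∈ range n, (j:R) * s ^ j)
          = C (-(n:ℚ)⁻¹) * ((1 - s) * ∑ j ∈ range n, (j:R) * s ^ j) := by ring
        _ = C (-(n:ℚ)⁻¹) * (Q - 1 - ((n:R) - 1) * 1) := by rw [h]
        _ = 1 - C ((n:ℚ)⁻¹) * Q := by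
            rw [hCn, hneg]; linear_combination hCqn
    -- δ = 1 - s + eD
    have hδ1 : (1:R) - s * P + C p * eD = 1 - s + eD := by
      rw [hP1, mul_one, hp1, map_one, one_mul]
    rw [hδ1]
    have hδe : ((1:R) - s + eD) * eD = eD := by linear_combination heD2 - hseD
    refine IsUnit.of_mul_eq_one (u + eD - eD * u) ?_
    linear_combination hu + (1 - u) * hδe
  · -- Nat.card I ≥ 2
    obtain ⟨m, hmdef⟩ : ∃ m, m = Fintype.card G := ⟨_, rfl⟩
    have hm0 : m ≠ 0 := by rw [hmdef]; exact Fintype.card_ne_zero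
    have hsm : s ^ m = 1 := by
      rw [hs, MonoidAlgebra.single_pow, one_pow, hmdef, pow_card_eq_one]
      exact MonoidAlgebra.one_def.symm
    obtain ⟨m', rfl⟩ : ∃ k, m = k + 1 := ⟨m - 1, by omega⟩
    set A : R := s * P with hA
    have f5 : A ^ (m' + 1) = C p ^ m' * P := by
      rw [hA, mul_pow, hsm, one_mul]
      exact aux_pow_of_sq P (C p) f1 m'
    set T : R := ∑ j ∈ range (m' + 1), A ^ j with hT
    have f6 : (1 - A) * T = 1 - A ^ (m' + 1) := by
      rw [hT]; linear_combination (-1 : R) * geom_sum_mul A (m' + 1)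
    have h2p : (2:ℚ) ≤ p := by rw [hp]; exact_mod_cast hcase
    have hpm : (1:ℚ) - p ^ (m' + 1) ≠ 0 := by
      have h1 : (1:ℚ) ≤ p ^ m' := one_le_pow₀ (by linarith)
      have h2 : (2:ℚ) ≤ p ^ (m' + 1) := by rw [pow_succ]; nlinarith
      intro hcontra; linarith
    set c : ℚ := ((1:ℚ) - p ^ (m' + 1))⁻¹ with hc_def
    set eI : R := C p⁻¹ * P with heI
    have hc : C c * (1 - C p ^ (m' + 1)) = 1 := by
      rw [← map_pow, ← map_one C, ← map_sub, ← map_mul, hc_def, inv_mul_cancel₀ hpm]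
    have g1 : eI * eI = eI := by
      rw [heI]; linear_combination (C p⁻¹ * C p⁻¹) * f1 + (C p⁻¹ * P) * hCp
    have g2 : eI * eD = eD := by
      rw [heI, heD]; linear_combination (C p⁻¹ * C q⁻¹) * f2 + (C q⁻¹ * Q) * hCp
    have g3 : eD * eD = eD := heD2
    have g4 : A * eI = A := by
      rw [heI, hA]; linear_combination (s * C p⁻¹) * f1 + (s * P) * hCp
    have g5 : A * eD = C p * eD := by
      rw [heD, hA]
      linear_combination (s * C q⁻¹) * f2 + (C p * C q⁻¹) * f4
    have g6 : A ^ (m' + 1) = C p ^ (m' + 1) * eI := by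
      rw [f5, heI]
      linear_combination (-(C p ^ m') * P) * hCp
    -- main computation
    have K1 : (eI - eD) * ((1:R) - A + C p * eD) = (eI - eD) * (1 - A) := by
      linear_combination (C p) * g2 - (C p) * g3
    have K4 : ((1:R) - eI + eD) * ((1:R) - A + C p * eD) = 1 - eI + eD := by
      linear_combination g4 - (C p) * g2 - g5 + (C p) * g3
    have K3 : A ^ (m' + 1) * (eI - eD) = C p ^ (m' + 1) * (eI - eD) := by
      linear_combination (eI - eD) * g6 + C p ^ (m' + 1) * g1 - C p ^ (m' + 1) * g2
    refine IsUnit.of_mul_eq_one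
      ((1:R) - eI + eD + C c * (T * (eI - eD))) ?_
    linear_combination K4 + (C c * T) * K1 + (C c * (eI - eD)) * f6 - C c * K3
      + (eI - eD) * hc
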